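/- Parity-check matrix from eigenvalues: Let C ⊆ F_q^{mℓ} be a λ-QT code with associated upper-triangular matrix G̃(x) and nonempty eigenvalue set, let β_1,…,β_t be its distinct eigenvalues, let V_i be a matrix over F whose rows form a basis of the eigenspace V_{β_i}, let H_i = (1, β_i, …, β_i^{m−1}) ⊗ V_i, and let H be the matrix stacking H_1,…,H_t. Then H is a parity-check matrix for C; that is, for c ∈ F_q^{mℓ} (read row-by-row from its m×ℓ array form, so that Hcᵀ has blocks Σ_{k=0}^{m−1} β_i^k V_i c_kᵀ where c_k is the k-th row), one has c ∈ C if and only if Hcᵀ = 0. -/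

import Mathlib

open Polynomial

open scoped Classical in
/-- Hamming weight: the number of nonzero coordinates. -/
noncomputable def wt {ι K : Type*} [Fintype ι] [Zero K] (c : ι → K) : ℕ :=
  (Finset.univ.filter fun i => c i ≠ 0).card

/-- Minimum Hamming weight of a nonzero codeword of `S`, with `⊤` for the zero code. -/
noncomputable def minDist {ι K : Type*} [Fintype ι] [Zero K] (S : Set (ι → K)) : ℕ∞ :=
  sInf {n : ℕ∞ | ∃ c ∈ S, c ≠ 0 ∧ (wt c : ℕ∞) = n}

/-- The λ-constashift by ℓ positions on m×ℓ arrays: row 0 becomes λ times old last row. -/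
def rho {Fq : Type*} [Field Fq] (m ℓ : ℕ) [NeZero m] (lam : Fq)
    (c : ZMod m × Fin ℓ → Fq) : ZMod m × Fin ℓ → Fq :=
  fun p => (if p.1 = 0 then lam else 1) * c (p.1 - 1, p.2)

/-- Reduction of a vector of polynomials mod `X^m - λ`, written as an m×ℓ array. -/
noncomputable def arrOf {Fq : Type*} [Field Fq] (m ℓ : ℕ) [NeZero m] (lam : Fq)
    (v : Fin ℓ → Polynomial Fq) : ZMod m × Fin ℓ → Fq :=
  fun p => ((v p.2) %ₘ (Polynomial.X ^ m - Polynomial.C lam)).coeff (p.1).val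

/-! ### Auxiliary lemmas -/

section Aux
variable {K : Type*} [Field K] {m ℓ : ℕ} [NeZero m] {lam : K}

lemma zmod_neg_one_val : ((0 : ZMod m) - 1).val = m - 1 := by
  cases m with
  | zero => exact absurd rfl (NeZero.ne 0)
  | succ m' => rw [zero_sub, ZMod.val_neg_one]; omega

lemma zmod_sub_one_val {k : ZMod m} (hk : k ≠ 0) : (k - 1).val = k.val - 1 := by
  have h1 : 1 ≤ k.val := Nat.one_le_iff_ne_zero.mpr (fun h => hk ((ZMod.val_eq_zero k).mp h))
  have hlt : k.val - 1 < m := lt_of_le_of_lt (Nat.sub_le _ _) (ZMod.val_lt k)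
  have : k - 1 = ((k.val - 1 : ℕ) : ZMod m) := by
    push_cast [Nat.cast_sub h1]
    rw [ZMod.natCast_val, ZMod.cast_id]
  rw [this, ZMod.val_cast_of_lt hlt]

lemma modByMonic_X_mul (p : K[X]) :
    (X * p) %ₘ (X ^ m - C lam) =
      X * (p %ₘ (X ^ m - C lam)) - C ((p %ₘ (X ^ m - C lam)).coeff (m - 1)) * (X ^ m - C lam) := by
  have hm : m ≠ 0 := NeZero.ne m
  obtain ⟨f, hfm, hdegf, hfdef⟩ : ∃ f : K[X], f.Monic ∧ f.degree = m ∧ f = X ^ m - C lam :=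
    ⟨_, monic_X_pow_sub_C lam hm, degree_X_pow_sub_C (Nat.pos_of_ne_zero hm) lam, rfl⟩
  rw [← hfdef]
  have hdr : (p %ₘ f).degree < (m : WithBot ℕ) := hdegf ▸ degree_modByMonic_lt p hfm
  set r : K[X] := p %ₘ f with hr
  set c : K := r.coeff (m - 1) with hc
  have hdeg2 : (X * r - C c * f).degree < f.degree := by
    rw [hdegf, degree_lt_iff_coeff_zero]
    intro N hN
    have hNm : m ≤ N := by exact_mod_cast hN
    have hN1 : N ≠ 0 := by omega
    obtain ⟨N', rfl⟩ := Nat.exists_eq_succ_of_ne_zero hN1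
    rw [coeff_sub, coeff_X_mul, hfdef, mul_sub, coeff_sub, ← C_mul, coeff_C_mul, coeff_C,
      coeff_X_pow]
    have h1 : r.coeff N' = if m = N' + 1 then c else 0 := by
      by_cases h : m = N' + 1
      · rw [if_pos h, hc]; congr 1; omega
      · rw [if_neg h]
        refine coeff_eq_zero_of_degree_lt (lt_of_lt_of_le hdr ?_)
        exact_mod_cast Nat.cast_le.mpr (by omega)
    rw [h1]
    by_cases h : m = N' + 1 <;> simp [h] <;> omega
  have key : X * p = (X * r - C c * f) + f * (X * (p /ₘ f) + C c) := by
    have h2 : r + f * (p /ₘ f) = p := modByMonic_add_div p f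
    linear_combination X * h2.symm
  rw [key, add_modByMonic, (modByMonic_eq_zero_iff_dvd hfm).mpr (Dvd.intro _ rfl),
    add_zero, (modByMonic_eq_self_iff hfm).mpr hdeg2]

lemma arrOf_add (v w : Fin ℓ → K[X]) :
    arrOf m ℓ lam (v + w) = arrOf m ℓ lam v + arrOf m ℓ lam w := by
  funext p
  simp [arrOf, add_modByMonic, coeff_add]

lemma arrOf_C_smul (a : K) (v : Fin ℓ → K[X]) :
    arrOf m ℓ lam (C a • v) = a • arrOf m ℓ lam v := by
  funext p
  have : (C a • v) p.2 = a • v p.2 := by simp [Pi.smul_apply, smul_eq_mul, smul_eq_C_mul]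
  simp [arrOf, this, smul_modByMonic, coeff_smul, smul_eq_mul]

lemma arrOf_X_smul (v : Fin ℓ → K[X]) :
    arrOf m ℓ lam ((X : K[X]) • v) = rho m ℓ lam (arrOf m ℓ lam v) := by
  have hm : m ≠ 0 := NeZero.ne m
  funext p
  obtain ⟨k, j⟩ := p
  have hXv : ((X : K[X]) • v) j = X * v j := rfl
  have hkv : k.val < m := ZMod.val_lt k
  show ((X * v j) %ₘ (X ^ m - C lam)).coeff k.val = _
  rw [modByMonic_X_mul]
  set r : K[X] := v j %ₘ (X ^ m - C lam) with hr
  have hrho : rho m ℓ lam (arrOf m ℓ lam v) (k, j)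
      = (if k = 0 then lam else 1) * r.coeff ((k - 1).val) := rfl
  rw [hrho, coeff_sub, coeff_C_mul, coeff_sub, coeff_X_pow, coeff_C]
  by_cases hk : k = 0
  · subst hk
    rw [ZMod.val_zero] at *
    rw [zmod_neg_one_val, if_pos rfl]
    rw [mul_comm X r, coeff_mul_X_zero]
    rw [if_neg (by omega : ¬ (0 = m)), if_pos rfl]
    ring
  · have hkv0 : k.val ≠ 0 := fun h => hk ((ZMod.val_eq_zero k).mp h)
    obtain ⟨kv, hkveq⟩ := Nat.exists_eq_succ_of_ne_zero hkv0
    rw [hkveq, coeff_X_mul, if_neg (by omega : ¬ (kv + 1 = m)),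
      if_neg (by omega : ¬ (kv + 1 = 0)), if_neg hk, zmod_sub_one_val hk, hkveq]
    simp

lemma arrOf_smul_mem (S : Submodule K (ZMod m × Fin ℓ → K))
    (hS : ∀ c ∈ S, rho m ℓ lam c ∈ S) (u : K[X]) :
    ∀ v : Fin ℓ → K[X], arrOf m ℓ lam v ∈ S → arrOf m ℓ lam (u • v) ∈ S := by
  induction u using Polynomial.induction_on with
  | C a => intro v hv; rw [arrOf_C_smul]; exact S.smul_mem a hv
  | add p q hp hq =>
      intro v hv
      rw [add_smul, arrOf_add]
      exact S.add_mem (hp v hv) (hq v hv)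
  | monomial nn a ih =>
      intro v hv
      have h1 : (C a * X ^ (nn + 1)) • v = (C a * X ^ nn) • ((X : K[X]) • v) := by
        rw [smul_smul]; ring_nf
      rw [h1]
      refine ih _ ?_
      rw [arrOf_X_smul]
      exact hS _ hv

end Aux

open Matrix in
lemma ker_perp_eq_range_vecMul {F : Type*} [Field F] {ℓ nn : ℕ}
    (M : Matrix (Fin ℓ) (Fin ℓ) F) (V : Matrix (Fin nn) (Fin ℓ) F)
    (hind : LinearIndependent F (fun r => V r))
    (hspan : Submodule.span F (Set.range fun r => V r) = LinearMap.ker M.mulVecLin)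
    (w : Fin ℓ → F) (hw : V.mulVec w = 0) : ∃ a, w = Matrix.vecMul a M := by
  classical
  set W : Submodule F (Fin ℓ → F) := LinearMap.range (Matrix.mulVecLin Mᵀ) with hW
  set Kk : Submodule F (Fin ℓ → F) := LinearMap.ker (Matrix.mulVecLin V) with hK
  have hVrow : ∀ r, M.mulVec (V r) = 0 := by
    intro r
    have : V r ∈ LinearMap.ker M.mulVecLin := by
      rw [← hspan]; exact Submodule.subset_span ⟨r, rfl⟩
    simpa [Matrix.mulVecLin_apply] using this
  have hWK : W ≤ Kk := by
    rintro _ ⟨a, rfl⟩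
    simp only [hK, LinearMap.mem_ker, Matrix.mulVecLin_apply, Matrix.mulVec_mulVec]
    have hVM : V * Mᵀ = 0 := by
      ext r j
      have := congrFun (hVrow r) j
      simp only [Matrix.mul_apply, Matrix.transpose_apply, Matrix.zero_apply]
      simpa [Matrix.mulVec, dotProduct, mul_comm] using this
    rw [hVM, Matrix.zero_mulVec]
  have hrankV : V.rank = nn := by
    rw [← Matrix.rank_transpose, Matrix.rank, Matrix.range_mulVecLin]
    show Module.finrank F (Submodule.span F (Set.range fun r => V r)) = nn
    rw [finrank_span_eq_card hind]
    simp
  have hkerM : Module.finrank F (LinearMap.ker M.mulVecLin) = nn := by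
    rw [← hspan, finrank_span_eq_card hind]; simp
  have hrn1 := LinearMap.finrank_range_add_finrank_ker (Matrix.mulVecLin M)
  have hrn2 := LinearMap.finrank_range_add_finrank_ker (Matrix.mulVecLin V)
  rw [Module.finrank_pi, Fintype.card_fin] at hrn1
  rw [Module.finrank_pi, Fintype.card_fin] at hrn2
  have hWd : Module.finrank F W = ℓ - nn := by
    have h2 : Module.finrank F W = Matrix.rank Mᵀ := rfl
    rw [h2, Matrix.rank_transpose, Matrix.rank]
    omega
  have hKd : Module.finrank F Kk = ℓ - nn := by
    have h2 : Module.finrank F (LinearMap.range V.mulVecLin) = nn := hrankV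
    have h3 : Module.finrank F Kk = Module.finrank F (LinearMap.ker V.mulVecLin) := rfl
    rw [h3]
    omega
  have hWKeq : W = Kk := Submodule.eq_of_le_of_finrank_eq hWK (by rw [hWd, hKd])
  have hwK : w ∈ Kk := by simp [hK, LinearMap.mem_ker, Matrix.mulVecLin_apply, hw]
  rw [← hWKeq] at hwK
  obtain ⟨a, ha⟩ := hwK
  exact ⟨a, by rw [← ha, Matrix.mulVecLin_apply, Matrix.mulVec_transpose]⟩

lemma descend_scalars {Fq F ι : Type*} [Field Fq] [Field F] [Algebra Fq F] [Fintype ι]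
    [DecidableEq ι] (S : Submodule Fq (ι → Fq)) (c : ι → Fq)
    (h : (fun p => algebraMap Fq F (c p)) ∈
      Submodule.span F ((fun (c0 : ι → Fq) => fun p => algebraMap Fq F (c0 p)) '' S)) :
    c ∈ S := by
  classical
  have : FiniteDimensional Fq (ι → Fq) := by infer_instance
  set Q := (ι → Fq) ⧸ S with hQ
  have : FiniteDimensional Fq Q := by infer_instance
  set d := Module.finrank Fq Q with hd
  set b := Module.finBasis Fq Q with hb
  set g : (ι → Fq) →ₗ[Fq] (Fin d → Fq) := b.equivFun.toLinearMap ∘ₗ S.mkQ with hg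
  have hker : ∀ x, g x = 0 ↔ x ∈ S := by
    intro x
    rw [hg, LinearMap.comp_apply]
    rw [show b.equivFun.toLinearMap (S.mkQ x) = b.equivFun (S.mkQ x) from rfl,
      LinearEquiv.map_eq_zero_iff]
    rw [Submodule.mkQ_apply, Submodule.Quotient.mk_eq_zero]
  set A : Fin d → ι → Fq := fun r p => g (Pi.single p 1 : ι → Fq) r with hA
  have hgx : ∀ x : ι → Fq, g x = fun r => ∑ p, x p * A r p := by
    intro x
    have hx : x = ∑ p, x p • (Pi.single p 1 : ι → Fq) := by
      funext pp
      rw [Finset.sum_apply]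
      rw [Finset.sum_eq_single pp]
      · simp
      · intro q _ hq; simp [Pi.single_apply, Ne.symm hq]
      · intro hpp; exact absurd (Finset.mem_univ pp) hpp
    conv_lhs => rw [hx]
    rw [map_sum]
    funext r
    simp only [_root_.map_smul, Finset.sum_apply, Pi.smul_apply, smul_eq_mul]
    rfl
  set T : (ι → F) →ₗ[F] (Fin d → F) :=
    Matrix.mulVecLin (Matrix.of fun r p => algebraMap Fq F (A r p)) with hT
  have hTgen : ∀ x ∈ ((fun (c0 : ι → Fq) => fun p => algebraMap Fq F (c0 p)) '' S), T x = 0 := by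
    rintro _ ⟨c0, hc0, rfl⟩
    funext r
    have hgc0 : g c0 = 0 := (hker c0).mpr hc0
    have : (∑ p, c0 p * A r p) = 0 := by
      have := congrFun hgc0 r
      rw [hgx c0] at this
      exact this
    simp only [hT, Matrix.mulVecLin_apply, Matrix.mulVec, dotProduct, Matrix.of_apply,
      Pi.zero_apply]
    calc ∑ p, algebraMap Fq F (A r p) * algebraMap Fq F (c0 p)
        = algebraMap Fq F (∑ p, c0 p * A r p) := by
          rw [map_sum]; exact Finset.sum_congr rfl fun p _ => by rw [← _root_.map_mul, mul_comm]
      _ = 0 := by rw [this, map_zero]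
  have hTc : T (fun p => algebraMap Fq F (c p)) = 0 := by
    have hle : Submodule.span F ((fun (c0 : ι → Fq) => fun p => algebraMap Fq F (c0 p)) '' S)
        ≤ LinearMap.ker T := by
      rw [Submodule.span_le]
      intro x hx
      exact LinearMap.mem_ker.mpr (hTgen x hx)
    exact LinearMap.mem_ker.mp (hle h)
  have hgc : g c = 0 := by
    funext r
    have := congrFun hTc r
    simp only [hT, Matrix.mulVecLin_apply, Matrix.mulVec, dotProduct, Matrix.of_apply,
      Pi.zero_apply] at this
    have h2 : algebraMap Fq F ((g c) r) = 0 := by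
      rw [hgx c]
      rw [map_sum]
      rw [← this]
      exact Finset.sum_congr rfl fun p _ => by rw [← _root_.map_mul, mul_comm]
    exact (map_eq_zero_iff _ (algebraMap Fq F).injective).mp h2 ▸ rfl
  exact (hker c).mp hgc

theorem parity_check_from_eigenvalues
    {Fq F : Type*} [Field Fq] [Fintype Fq] [Field F] [Algebra Fq F]
    (m ℓ : ℕ) [NeZero m] (hcop : Nat.Coprime m (Fintype.card Fq))
    (lam : Fq) (hlam : lam ≠ 0)
    (hsplit : IsSplittingField Fq F (X ^ m - C lam))
    (𝓒 : Submodule Fq (ZMod m × Fin ℓ → Fq))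
    (hQT : ∀ c ∈ 𝓒, rho m ℓ lam c ∈ 𝓒)
    (G : Matrix (Fin ℓ) (Fin ℓ) (Polynomial Fq))
    (htri : ∀ i j, j < i → G i j = 0)
    (hdeg : ∀ i j, i < j → (G i j).degree < (G j j).degree)
    (hdiv : ∀ j, G j j ∣ X ^ m - C lam)
    (hfull : ∀ j, G j j = X ^ m - C lam → ∀ i, i ≠ j → G i j = 0)
    (hGen : ∀ v : Fin ℓ → Polynomial Fq,
      arrOf m ℓ lam v ∈ 𝓒 ↔ v ∈ Submodule.span (Polynomial Fq) (Set.range fun i j => G i j))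
    (t : ℕ) (ht : 0 < t) (β : Fin t → F) (hβinj : Function.Injective β)
    (hβΩ : ∀ i, β i ^ m = algebraMap Fq F lam)
    (hβroot : ∀ i, Polynomial.aeval (β i) G.det = 0)
    (hβall : ∀ x : F, x ^ m = algebraMap Fq F lam → Polynomial.aeval x G.det = 0 → ∃ i, β i = x)
    (n : Fin t → ℕ) (V : ∀ i, Matrix (Fin (n i)) (Fin ℓ) F)
    (hVind : ∀ i, LinearIndependent F (fun r => V i r))
    (hVspan : ∀ i, Submodule.span F (Set.range fun r => V i r) =
      LinearMap.ker (Matrix.mulVecLin (G.map fun p => Polynomial.aeval (β i) p)))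
    (H : Matrix ((i : Fin t) × Fin (n i)) (ZMod m × Fin ℓ) F)
    (hH : ∀ ir p, H ir p = β ir.1 ^ (p.1).val * V ir.1 ir.2 p.2)
 :
    ∀ c : ZMod m × Fin ℓ → Fq,
      c ∈ 𝓒 ↔ H.mulVec (fun p => algebraMap Fq F (c p)) = 0 := by
  classical
  intro c
  have hm : m ≠ 0 := NeZero.ne m
  set alg := algebraMap Fq F with halg
  have hfm : ((X : Polynomial Fq) ^ m - C lam).Monic := monic_X_pow_sub_C lam hm
  have hfFm : ((X : Polynomial F) ^ m - C (alg lam)).Monic := monic_X_pow_sub_C _ hm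
  have hmap : ((X : Polynomial Fq) ^ m - C lam).map alg = (X : Polynomial F) ^ m - C (alg lam) := by
    simp [Polynomial.map_sub, Polynomial.map_pow]
  set vc : Fin ℓ → Polynomial Fq := fun j => ∑ k : ZMod m, C (c (k, j)) * X ^ (k.val) with hvc
  have hdegvc : ∀ j, (vc j).degree < ((X : Polynomial Fq) ^ m - C lam).degree := by
    intro j
    rw [degree_X_pow_sub_C (Nat.pos_of_ne_zero hm)]
    refine lt_of_le_of_lt (degree_sum_le _ _) ?_
    rw [Finset.sup_lt_iff (by exact_mod_cast WithBot.bot_lt_coe m)]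
    intro k _
    exact lt_of_le_of_lt (degree_C_mul_X_pow_le _ _) (by exact_mod_cast ZMod.val_lt k)
  have hmod : ∀ j, vc j %ₘ ((X : Polynomial Fq) ^ m - C lam) = vc j :=
    fun j => (modByMonic_eq_self_iff hfm).mpr (hdegvc j)
  have harr : arrOf m ℓ lam vc = c := by
    funext p
    obtain ⟨k, j⟩ := p
    show ((vc j) %ₘ ((X : Polynomial Fq) ^ m - C lam)).coeff k.val = c (k, j)
    rw [hmod]
    simp only [hvc, finset_sum_coeff, coeff_C_mul, coeff_X_pow]
    rw [Finset.sum_eq_single k]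
    · simp
    · intro k' _ hk'
      have hne : k.val ≠ k'.val := fun h => hk' (ZMod.val_injective m h.symm)
      simp [Ne.symm hne, hne]
    · intro hk; exact absurd (Finset.mem_univ k) hk
  set w : (i : Fin t) → Fin ℓ → F := fun i j => Polynomial.aeval (β i) (vc j) with hwdef
  have hwval : ∀ i j, w i j = ∑ k : ZMod m, alg (c (k, j)) * β i ^ (k.val) := by
    intro i j
    show Polynomial.aeval (β i) (vc j) = _
    simp only [hvc, map_sum]
    exact Finset.sum_congr rfl fun k _ => by rw [map_mul, aeval_C, map_pow, aeval_X, halg]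
  have hHw : ∀ (i : Fin t) (r : Fin (n i)),
      (H.mulVec fun p => alg (c p)) ⟨i, r⟩ = ((V i).mulVec (w i)) r := by
    intro i r
    show ∑ p : ZMod m × Fin ℓ, H ⟨i, r⟩ p * alg (c p) = ∑ j, V i r j * w i j
    rw [Fintype.sum_prod_type, Finset.sum_comm]
    refine Finset.sum_congr rfl fun j _ => ?_
    rw [hwval, Finset.mul_sum]
    refine Finset.sum_congr rfl fun k _ => ?_
    rw [hH ⟨i, r⟩ (k, j)]
    ring
  constructor
  · -- membership implies parity check
    intro hc
    have hvcM : vc ∈ Submodule.span (Polynomial Fq) (Set.range fun i j => G i j) :=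
      (hGen vc).mp (by rw [harr]; exact hc)
    have key : ∀ (v : Fin ℓ → Polynomial Fq),
        v ∈ Submodule.span (Polynomial Fq) (Set.range fun i0 j => G i0 j) →
        ∀ i, (V i).mulVec (fun j => Polynomial.aeval (β i) (v j)) = 0 := by
      intro v hv
      refine Submodule.span_induction
        (p := fun v _ => ∀ i, (V i).mulVec (fun j => Polynomial.aeval (β i) (v j)) = 0)
        ?_ ?_ ?_ ?_ hv
      · rintro x ⟨i0, rfl⟩ i
        funext r
        have hmem : V i r ∈
            LinearMap.ker (Matrix.mulVecLin (G.map fun p => Polynomial.aeval (β i) p)) := by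
          rw [← hVspan i]; exact Submodule.subset_span ⟨r, rfl⟩
        have hrow : (G.map fun p => Polynomial.aeval (β i) p).mulVec (V i r) = 0 := by
          simpa [Matrix.mulVecLin_apply] using hmem
        have h2 : ∑ j, (G.map fun p => Polynomial.aeval (β i) p) i0 j * V i r j = 0 := by
          have := congrFun hrow i0
          simpa [Matrix.mulVec, dotProduct] using this
        show ∑ j, V i r j * Polynomial.aeval (β i) (G i0 j) = (0 : F)
        calc ∑ j, V i r j * Polynomial.aeval (β i) (G i0 j)
            = ∑ j, (G.map fun p => Polynomial.aeval (β i) p) i0 j * V i r j :=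
              Finset.sum_congr rfl fun j _ => by rw [Matrix.map_apply, mul_comm]
          _ = 0 := h2
      · intro i
        have : (fun j => Polynomial.aeval (β i) ((0 : Fin ℓ → Polynomial Fq) j)) = 0 := by
          funext j; simp
        rw [this, Matrix.mulVec_zero]
      · intro x y hx hy ihx ihy i
        have hxy : (fun j => Polynomial.aeval (β i) ((x + y) j))
            = (fun j => Polynomial.aeval (β i) (x j)) + (fun j => Polynomial.aeval (β i) (y j)) := by
          funext j; simp
        rw [hxy, Matrix.mulVec_add, ihx i, ihy i, add_zero]
      · intro u x hx ih i
        have hxy : (fun j => Polynomial.aeval (β i) ((u • x) j))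
            = (Polynomial.aeval (β i) u) • fun j => Polynomial.aeval (β i) (x j) := by
          funext j; simp [smul_eq_mul]
        rw [hxy, Matrix.mulVec_smul, ih i, smul_zero]
    funext ir
    obtain ⟨i, r⟩ := ir
    show (H.mulVec fun p => alg (c p)) ⟨i, r⟩ = 0
    rw [hHw i r]
    exact congrFun (key vc hvcM i) r
  · -- parity check implies membership
    intro hH0
    have hw0 : ∀ i, (V i).mulVec (w i) = 0 := by
      intro i; funext r
      have := congrFun hH0 ⟨i, r⟩
      rw [hHw i r] at this
      exact this
    -- root set facts
    have hchar : (m : Fq) ≠ 0 := by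
      intro h0
      obtain ⟨p, hp⟩ := CharP.exists Fq
      haveI := hp
      obtain ⟨nn, hprime, hcard⟩ := FiniteField.card Fq p
      have hpm : p ∣ m := (CharP.cast_eq_zero_iff Fq p m).mp h0
      have hpq : p ∣ Fintype.card Fq := by
        rw [hcard]; exact dvd_pow_self p (by exact_mod_cast nn.ne_zero)
      have h1 : p ∣ 1 := hcop ▸ Nat.dvd_gcd hpm hpq
      exact Nat.Prime.one_lt hprime |>.ne' (Nat.dvd_one.mp h1)
    have hsep : ((X : Polynomial Fq) ^ m - C lam).Separable :=
      separable_X_pow_sub_C lam hchar hlam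
    haveI := hsplit
    have hsplits : Splits (((X : Polynomial Fq) ^ m - C lam).map alg) :=
      IsSplittingField.splits F ((X : Polynomial Fq) ^ m - C lam)
    have hsF : Splits ((X : Polynomial F) ^ m - C (alg lam)) := by
      rw [← hmap]; exact hsplits
    have hsepF : ((X : Polynomial F) ^ m - C (alg lam)).Separable := by
      rw [← hmap]; exact hsep.map
    have hnodup : ((X : Polynomial F) ^ m - C (alg lam)).roots.Nodup :=
      Polynomial.nodup_roots hsepF
    set s : Finset F := ((X : Polynomial F) ^ m - C (alg lam)).roots.toFinset with hs
    have hprod : (X : Polynomial F) ^ m - C (alg lam) = ∏ b ∈ s, (X - C b) := by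
      conv_lhs => rw [hsF.eq_prod_roots_of_monic hfFm]
      rw [show (∏ b ∈ s, (X - C b))
          = (s.val.map (fun b => X - C b)).prod from rfl]
      rw [hs, Multiset.toFinset_val, Multiset.dedup_eq_self.mpr hnodup]
    have hmemroot : ∀ b ∈ s, b ^ m = alg lam := by
      intro b hb
      rw [hs, Multiset.mem_toFinset, mem_roots hfFm.ne_zero] at hb
      have := hb
      rw [IsRoot, eval_sub, eval_pow, eval_X, eval_C, sub_eq_zero] at this
      exact this
    have hne : s.Nonempty := by
      refine ⟨β ⟨0, ht⟩, ?_⟩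
      rw [hs, Multiset.mem_toFinset, mem_roots hfFm.ne_zero]
      rw [IsRoot, eval_sub, eval_pow, eval_X, eval_C, sub_eq_zero]
      exact hβΩ ⟨0, ht⟩
    -- existence of row combinations at each root
    have hexists : ∀ b ∈ s, ∃ a : Fin ℓ → F,
        (fun k => Polynomial.aeval b (vc k))
          = Matrix.vecMul a (G.map fun p => Polynomial.aeval b p) := by
      intro b hb
      by_cases hdet : Polynomial.aeval b G.det = 0
      · obtain ⟨i, rfl⟩ := hβall b (hmemroot b hb) hdet
        exact ker_perp_eq_range_vecMul _ (V i) (hVind i) (hVspan i) (w i) (hw0 i)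
      · have hdet2 : (G.map fun p => Polynomial.aeval b p).det ≠ 0 := by
          intro h0
          apply hdet
          have := RingHom.map_det (Polynomial.aeval b).toRingHom G
          simp only [AlgHom.toRingHom_eq_coe, RingHom.coe_coe] at this
          rw [this]
          exact h0
        set Gb := G.map fun p => Polynomial.aeval b p with hGb
        have hunit : IsUnit Gb.det := isUnit_iff_ne_zero.mpr hdet2
        refine ⟨Matrix.vecMul (fun k => Polynomial.aeval b (vc k)) Gb⁻¹, ?_⟩
        rw [Matrix.vecMul_vecMul, Matrix.nonsing_inv_mul Gb hunit, Matrix.vecMul_one]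
    -- the span of images of 𝓒 over F
    set iota : (ZMod m × Fin ℓ → Fq) → (ZMod m × Fin ℓ → F) :=
      fun c0 => fun p => alg (c0 p) with hiota
    set C' : Submodule F (ZMod m × Fin ℓ → F) := Submodule.span F (iota '' 𝓒) with hC'
    have hrho' : ∀ x ∈ C', rho m ℓ (alg lam) x ∈ C' := by
      have hlin : ∃ L : (ZMod m × Fin ℓ → F) →ₗ[F] (ZMod m × Fin ℓ → F),
          ∀ y, L y = rho m ℓ (alg lam) y := by
        refine ⟨{ toFun := rho m ℓ (alg lam), map_add' := ?_, map_smul' := ?_ }, fun y => rfl⟩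
        · intro y z; funext p
          simp only [rho, Pi.add_apply, mul_add]
        · intro a y; funext p
          simp only [rho, Pi.smul_apply, smul_eq_mul, RingHom.id_apply]
          ring
      obtain ⟨L, hL⟩ := hlin
      have hsub : C' ≤ Submodule.comap L C' := by
        rw [hC', Submodule.span_le]
        rintro _ ⟨c0, hc0, rfl⟩
        show L (iota c0) ∈ C'
        rw [hL]
        have heq : rho m ℓ (alg lam) (iota c0) = iota (rho m ℓ lam c0) := by
          funext p
          by_cases hp : p.1 = 0 <;> simp [rho, hiota, hp]
        rw [heq]
        exact Submodule.subset_span ⟨_, hQT c0 hc0, rfl⟩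
      intro x hx
      have := hsub hx
      rw [Submodule.mem_comap, hL] at this
      exact this
    have hkeyB : ∀ vv : Fin ℓ → Polynomial F,
        vv ∈ Submodule.span (Polynomial F) (Set.range fun i0 => fun j => (G i0 j).map alg) →
        arrOf m ℓ (alg lam) vv ∈ C' := by
      intro vv hvv
      refine Submodule.span_induction (p := fun vv _ => arrOf m ℓ (alg lam) vv ∈ C')
        ?_ ?_ ?_ ?_ hvv
      · rintro x ⟨i0, rfl⟩
        show arrOf m ℓ (alg lam) (fun j => (G i0 j).map alg) ∈ C'
        have h1 : arrOf m ℓ (alg lam) (fun j => (G i0 j).map alg)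
            = iota (arrOf m ℓ lam (fun j => G i0 j)) := by
          funext p
          show (((G i0 p.2).map alg) %ₘ ((X : Polynomial F) ^ m - C (alg lam))).coeff p.1.val
            = alg (((G i0 p.2) %ₘ ((X : Polynomial Fq) ^ m - C lam)).coeff p.1.val)
          rw [← hmap, ← Polynomial.map_modByMonic alg hfm, coeff_map]
        rw [h1]
        exact Submodule.subset_span ⟨_, (hGen _).mpr (Submodule.subset_span ⟨i0, rfl⟩), rfl⟩
      · show arrOf m ℓ (alg lam) (0 : Fin ℓ → Polynomial F) ∈ C'
        have h0 : arrOf m ℓ (alg lam) (0 : Fin ℓ → Polynomial F) = 0 := by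
          funext p
          show ((0 : Polynomial F) %ₘ _).coeff _ = _
          simp
        rw [h0]; exact C'.zero_mem
      · intro x y hx hy ihx ihy
        show arrOf m ℓ (alg lam) (x + y) ∈ C'
        rw [arrOf_add]; exact C'.add_mem ihx ihy
      · intro u x hx ih
        exact arrOf_smul_mem C' hrho' u x ih
    set vF : Fin ℓ → Polynomial F := fun j => (vc j).map alg with hvF
    have hiotac : arrOf m ℓ (alg lam) vF = iota c := by
      funext p
      show (((vc p.2).map alg) %ₘ ((X : Polynomial F) ^ m - C (alg lam))).coeff p.1.val
        = alg (c p)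
      rw [← hmap, ← Polynomial.map_modByMonic alg hfm, coeff_map]
      rw [show ((vc p.2) %ₘ ((X : Polynomial Fq) ^ m - C lam)).coeff p.1.val
          = arrOf m ℓ lam vc p from rfl, harr]
    have hsum1 : ∑ b ∈ s, Lagrange.basis s id b = 1 :=
      Lagrange.sum_basis (Set.injOn_id _) hne
    choose a ha using hexists
    have hdecomp : ∀ b ∈ s, arrOf m ℓ (alg lam) ((Lagrange.basis s id b) • vF) ∈ C' := by
      intro b hb
      set e : Polynomial F := Lagrange.basis s id b with he
      set y : Fin ℓ → Polynomial F :=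
        ∑ j, (C (a b hb j) * e) • (fun k => (G j k).map alg) with hy
      have hyC : arrOf m ℓ (alg lam) y ∈ C' :=
        hkeyB y (Submodule.sum_mem _ fun j _ =>
          Submodule.smul_mem _ _ (Submodule.subset_span ⟨j, rfl⟩))
      have hform : ∀ k, (e • vF - y) k
          = e * (vF k - ∑ j, C (a b hb j) * (G j k).map alg) := by
        intro k
        simp only [hy, Pi.sub_apply, Pi.smul_apply, smul_eq_mul, Finset.sum_apply]
        rw [mul_sub, Finset.mul_sum]
        congr 1
        refine Finset.sum_congr rfl fun j _ => ?_
        ring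
      have hdvd : ∀ k, ((X : Polynomial F) ^ m - C (alg lam)) ∣ (e • vF - y) k := by
        intro k
        rw [hprod]
        refine Finset.prod_dvd_of_coprime ?_ ?_
        · intro x hx y0 hy0 hxy
          exact Polynomial.pairwise_coprime_X_sub_C (Function.injective_id) hxy
        · intro b' hb'
          rw [dvd_iff_isRoot, IsRoot, hform k, eval_mul]
          rcases eq_or_ne b' b with rfl | hbb
          · have h5 := congrFun (ha b' hb) k
            have h6 : eval b' (vF k - ∑ j, C (a b' hb j) * (G j k).map alg) = 0 := by
              rw [eval_sub, eval_finset_sum]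
              have h7 : eval b' (vF k) = Polynomial.aeval b' (vc k) := by
                rw [hvF, aeval_def, eval_map]
              rw [h7, h5]
              rw [Matrix.vecMul, dotProduct]
              rw [sub_eq_zero]
              refine Finset.sum_congr rfl fun j _ => ?_
              rw [eval_mul, eval_C, Matrix.map_apply, aeval_def, eval_map]
            rw [h6, mul_zero]
          · have h6 : eval b' e = 0 :=
              Lagrange.eval_basis_of_ne (v := id) (Ne.symm hbb) hb'
            rw [h6, zero_mul]
      have hsplit2 : e • vF = y + (e • vF - y) := by rw [add_sub_cancel]
      rw [hsplit2, arrOf_add]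
      have hz : arrOf m ℓ (alg lam) (e • vF - y) = 0 := by
        funext p
        show (((e • vF - y) p.2) %ₘ ((X : Polynomial F) ^ m - C (alg lam))).coeff p.1.val = 0
        rw [(modByMonic_eq_zero_iff_dvd hfFm).mpr (hdvd p.2)]
        simp
      rw [hz]
      simpa using C'.add_mem hyC C'.zero_mem
    have hvFdecomp : vF = ∑ b ∈ s, (Lagrange.basis s id b) • vF := by
      rw [← Finset.sum_smul, hsum1, one_smul]
    have hfinal : arrOf m ℓ (alg lam) vF ∈ C' := by
      rw [hvFdecomp]
      have hAH : arrOf m ℓ (alg lam) (∑ b ∈ s, (Lagrange.basis s id b) • vF)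
          = ∑ b ∈ s, arrOf m ℓ (alg lam) ((Lagrange.basis s id b) • vF) := by
        let AH : (Fin ℓ → Polynomial F) →+ (ZMod m × Fin ℓ → F) :=
          { toFun := arrOf m ℓ (alg lam)
            map_zero' := by
              funext p
              show ((0 : Polynomial F) %ₘ _).coeff _ = _
              simp
            map_add' := arrOf_add }
        exact map_sum AH _ s
      rw [hAH]
      exact Submodule.sum_mem _ fun b hb => hdecomp b hb
    rw [hiotac] at hfinal
    exact descend_scalars 𝓒 c hfinal
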